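/- arXiv:2201.11447 — 4 statements merged into one kernel-verified Lean document; each statement's English description precedes it below -/
import Mathlib

section
/- Let D be a digraph, let ε, δ > 0 and let n ≥ 1. Suppose there is a 3-colored complete graph G on n vertices which contains a collection of at least ε·n² pairwise pair-disjoint copies of C(D), but at most δ·n^{v(D)} copies of C(D) in total. Then there is a digraph G' on n vertices which contains a collection of at least ε·n² pairwise pair-disjoint induced copies of D, but at most δ·n^{v(D)} induced copies of D in total. -/
/-- A `k`-colored complete graph on vertex set `Fin n`: a symmetric assignment of a
color in `Fin k` to each pair of vertices (the diagonal values are irrelevant). -/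
def IsColoring {n k : ℕ} (G : Fin n → Fin n → Fin k) : Prop :=
  ∀ u v : Fin n, G u v = G v u

/-- `φ` is a copy of the `k`-colored complete graph `F` in `G`: an injection of the
vertices preserving all edge colors. -/
def IsCopy {m n k : ℕ} (F : Fin m → Fin m → Fin k) (G : Fin n → Fin n → Fin k)
    (φ : Fin m → Fin n) : Prop :=
  Function.Injective φ ∧ ∀ u v : Fin m, u ≠ v → G (φ u) (φ v) = F u v

/-- The number of copies of `F` in `G`. -/
noncomputable def copyCount {m n k : ℕ} (F : Fin m → Fin m → Fin k)
    (G : Fin n → Fin n → Fin k) : ℕ :=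
  Nat.card {φ : Fin m → Fin n // IsCopy F G φ}

/-- A family of pairwise pair-disjoint copies: any two distinct members share at most
one vertex. -/
def PairDisjointFamily {m n : ℕ} (Φ : Finset (Fin m → Fin n)) : Prop :=
  ∀ φ ∈ Φ, ∀ ψ ∈ Φ, φ ≠ ψ → (Set.range φ ∩ Set.range ψ).ncard ≤ 1

/-- `G` contains a collection of at least `t` pairwise pair-disjoint copies of `F`. -/
def HasDisjointCopies {m n k : ℕ} (F : Fin m → Fin m → Fin k)
    (G : Fin n → Fin n → Fin k) (t : ℝ) : Prop :=
  ∃ Φ : Finset (Fin m → Fin n), t ≤ (Φ.card : ℝ) ∧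
    (∀ φ ∈ Φ, IsCopy F G φ) ∧ PairDisjointFamily Φ

/-- The number of (unordered) edges whose colors differ between `G` and `G'`. -/
noncomputable def changedEdges {n k : ℕ} (G G' : Fin n → Fin n → Fin k) : ℕ :=
  Nat.card {p : Fin n × Fin n // p.1 < p.2 ∧ G p.1 p.2 ≠ G' p.1 p.2}

/-- A digraph on `Fin n`: an irreflexive (boolean) edge relation. Anti-parallel edges
are allowed, but no loops. -/
def IsDigraph {n : ℕ} (E : Fin n → Fin n → Bool) : Prop :=
  ∀ v : Fin n, E v v = false

/-- `φ` is an induced copy of the digraph `D` in the digraph `G`. -/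
def IsInducedCopy {m n : ℕ} (D : Fin m → Fin m → Bool) (G : Fin n → Fin n → Bool)
    (φ : Fin m → Fin n) : Prop :=
  Function.Injective φ ∧ ∀ u v : Fin m, u ≠ v → G (φ u) (φ v) = D u v

/-- The number of induced copies of `D` in `G`. -/
noncomputable def inducedCopyCount {m n : ℕ} (D : Fin m → Fin m → Bool)
    (G : Fin n → Fin n → Bool) : ℕ :=
  Nat.card {φ : Fin m → Fin n // IsInducedCopy D G φ}

/-- `G` contains a collection of at least `t` pairwise pair-disjoint induced copies
of `D`. -/
def HasDisjointInducedCopies {m n : ℕ} (D : Fin m → Fin m → Bool)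
    (G : Fin n → Fin n → Bool) (t : ℝ) : Prop :=
  ∃ Φ : Finset (Fin m → Fin n), t ≤ (Φ.card : ℝ) ∧
    (∀ φ ∈ Φ, IsInducedCopy D G φ) ∧ PairDisjointFamily Φ

/-- The number of directed edges that must be added/deleted to turn `G` into `G'`. -/
noncomputable def changedArcs {n : ℕ} (G G' : Fin n → Fin n → Bool) : ℕ :=
  Nat.card {p : Fin n × Fin n // G p.1 p.2 ≠ G' p.1 p.2}

/-- Induced `D`-freeness is easily testable: there are constants `c, C > 0` such that
for every `ε ∈ (0,1)`, every digraph `G` on `n` vertices with at most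
`c · ε^C · n^(v D)` induced copies of `D` can be made induced `D`-free by
adding/deleting at most `ε · n²` directed edges. -/
def EasilyTestableDigraph {m : ℕ} (D : Fin m → Fin m → Bool) : Prop :=
  ∃ c C : ℝ, 0 < c ∧ 0 < C ∧ ∀ ε : ℝ, 0 < ε → ε < 1 → ∀ n : ℕ,
    ∀ G : Fin n → Fin n → Bool, IsDigraph G →
      (inducedCopyCount D G : ℝ) ≤ c * ε ^ C * (n : ℝ) ^ m →
      ∃ G' : Fin n → Fin n → Bool, IsDigraph G' ∧
        (∀ φ : Fin m → Fin n, ¬ IsInducedCopy D G' φ) ∧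
        (changedArcs G G' : ℝ) ≤ ε * (n : ℝ) ^ 2

/-- The 3-colored complete graph `C(D)` associated to a digraph `D`: the color of a
pair `{u,v}` is the number of directed edges of `D` between `u` and `v` (0, 1 or 2). -/
def CD {m : ℕ} (D : Fin m → Fin m → Bool) : Fin m → Fin m → Fin 3 :=
  fun u v => (if D u v then 1 else 0) + (if D v u then 1 else 0)

/-- If there is a 3-colored complete graph `G` on `n` vertices with at
least `ε·n²` pair-disjoint copies of `C(D)` but at most `δ·n^(v D)` copies of `C(D)`
in total, then there is a digraph `G'` on `n` vertices with at least `ε·n²`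
pair-disjoint induced copies of `D` but at most `δ·n^(v D)` induced copies of `D`
in total. -/
theorem colored_hardness_to_digraph_hardness {m : ℕ} (D : Fin m → Fin m → Bool)
    (hD : IsDigraph D) (ε δ : ℝ) (hε : 0 < ε) (hδ : 0 < δ) (n : ℕ) (hn : 1 ≤ n)
    (G : Fin n → Fin n → Fin 3) (hG : IsColoring G)
    (hdisj : HasDisjointCopies (CD D) G (ε * (n : ℝ) ^ 2))
    (hcount : (copyCount (CD D) G : ℝ) ≤ δ * (n : ℝ) ^ m) :
    ∃ G' : Fin n → Fin n → Bool, IsDigraph G' ∧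
      HasDisjointInducedCopies D G' (ε * (n : ℝ) ^ 2) ∧
      (inducedCopyCount D G' : ℝ) ≤ δ * (n : ℝ) ^ m := by
  classical
  obtain ⟨Φ, hΦcard, hΦcopy, hΦdisj⟩ := hdisj
  -- any two witnesses of a covered ordered pair give the same orientation
  have huniq : ∀ ψ ∈ Φ, ∀ ψ' ∈ Φ, ∀ a b a' b' : Fin m, a ≠ b → a' ≠ b' →
      ψ a = ψ' a' → ψ b = ψ' b' → D a b = D a' b' := by
    intro ψ hψ ψ' hψ' a b a' b' hab ha'b' h1 h2
    by_cases hpp : ψ = ψ'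
    · subst hpp
      rw [(hΦcopy ψ hψ).1 h1, (hΦcopy ψ hψ).1 h2]
    · exfalso
      have hd := hΦdisj ψ hψ ψ' hψ' hpp
      have hinj := (hΦcopy ψ hψ).1
      have hne : ψ a ≠ ψ b := fun h => hab (hinj h)
      have hsub : ({ψ a, ψ b} : Set (Fin n)) ⊆ Set.range ψ ∩ Set.range ψ' := by
        intro x hx
        rcases hx with rfl | hx
        · exact ⟨⟨a, rfl⟩, ⟨a', h1.symm⟩⟩
        · simp only [Set.mem_singleton_iff] at hx
          subst hx; exact ⟨⟨b, rfl⟩, ⟨b', h2.symm⟩⟩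
      have h2le : 2 ≤ (Set.range ψ ∩ Set.range ψ').ncard := by
        have := Set.ncard_le_ncard hsub ((Set.finite_range ψ).inter_of_left _)
        rwa [Set.ncard_pair hne] at this
      omega
  set Cov : Fin n → Fin n → Prop := fun x y =>
    ∃ t : (Fin m → Fin n) × Fin m × Fin m,
      t.1 ∈ Φ ∧ t.2.1 ≠ t.2.2 ∧ t.1 t.2.1 = x ∧ t.1 t.2.2 = y with hCovdef
  set G' : Fin n → Fin n → Bool := fun x y =>
    if h : Cov x y then D (Classical.choose h).2.1 (Classical.choose h).2.2
    else decide (x ≠ y ∧ (G x y = 2 ∨ (G x y = 1 ∧ x < y))) with hG'def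
  -- Lemma A : copies in Φ become induced copies of D
  have hA : ∀ ψ ∈ Φ, ∀ a b : Fin m, a ≠ b → G' (ψ a) (ψ b) = D a b := by
    intro ψ hψ a b hab
    have h : Cov (ψ a) (ψ b) := ⟨(ψ, a, b), hψ, hab, rfl, rfl⟩
    have hs := Classical.choose_spec h
    obtain ⟨ht1, ht2, ht3, ht4⟩ := hs
    have := huniq _ ht1 ψ hψ _ _ a b ht2 hab ht3 ht4
    simp only [hG'def, dif_pos h]
    exact this
  -- Cov is symmetric
  have hCovsymm : ∀ x y, Cov x y → Cov y x := by
    rintro x y ⟨⟨ψ, a, b⟩, h1, h2, h3, h4⟩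
    exact ⟨(ψ, b, a), h1, h2.symm, h4, h3⟩
  -- Lemma B : CD G' agrees with G off the diagonal
  have hB : ∀ x y : Fin n, x ≠ y → CD G' x y = G x y := by
    intro x y hxy
    by_cases h : Cov x y
    · have hs := Classical.choose_spec h
      obtain ⟨ht1, ht2, ht3, ht4⟩ := hs
      set ψ := (Classical.choose h).1
      set a := (Classical.choose h).2.1
      set b := (Classical.choose h).2.2
      have hxy1 : G' x y = D a b := by
        rw [← ht3, ← ht4]; exact hA ψ ht1 a b ht2
      have hyx : G' y x = D b a := by
        rw [← ht3, ← ht4]; exact hA ψ ht1 b a ht2.symm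
      have hcol : G x y = CD D a b := by
        rw [← ht3, ← ht4]; exact (hΦcopy ψ ht1).2 a b ht2
      rw [hcol]
      simp only [CD, hxy1, hyx]
    · have h' : ¬ Cov y x := fun hc => h (hCovsymm _ _ hc)
      have hxy1 : G' x y = decide (x ≠ y ∧ (G x y = 2 ∨ (G x y = 1 ∧ x < y))) := by
        simp only [hG'def, dif_neg h]
      have hyx : G' y x = decide (y ≠ x ∧ (G y x = 2 ∨ (G y x = 1 ∧ y < x))) := by
        simp only [hG'def, dif_neg h']
      rw [hG y x] at hyx
      have h3 : G x y = 0 ∨ G x y = 1 ∨ G x y = 2 := by omega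
      rcases h3 with h0 | h1 | h2
      · rw [h0] at hxy1 hyx ⊢
        simp only [CD, hxy1, hyx]
        simp <;> decide
      · rw [h1] at hxy1 hyx ⊢
        rcases lt_or_gt_of_ne hxy with hlt | hgt
        · have hnot : ¬ y < x := not_lt_of_gt hlt
          simp only [CD, hxy1, hyx]
          simp [hxy, hxy.symm, hlt, hnot]
        · have hnot : ¬ x < y := not_lt_of_gt hgt
          simp only [CD, hxy1, hyx]
          simp [hxy, hxy.symm, hgt, hnot]
      · rw [h2] at hxy1 hyx ⊢
        simp only [CD, hxy1, hyx]
        simp [hxy, hxy.symm]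
  refine ⟨G', ?_, ?_, ?_⟩
  · -- IsDigraph G'
    intro v
    have hnc : ¬ Cov v v := by
      rintro ⟨⟨ψ, a, b⟩, h1, h2, h3, h4⟩
      exact h2 ((hΦcopy ψ h1).1 (h3.trans h4.symm))
    simp only [hG'def, dif_neg hnc]
    simp
  · -- disjoint induced copies
    refine ⟨Φ, hΦcard, ?_, hΦdisj⟩
    intro φ hφ
    exact ⟨(hΦcopy φ hφ).1, fun u v huv => hA φ hφ u v huv⟩
  · -- count bound
    have hle : inducedCopyCount D G' ≤ copyCount (CD D) G := by
      apply Nat.card_le_card_of_injective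
        (fun φ => (⟨φ.1, φ.2.1, fun u v huv => by
          have hne : φ.1 u ≠ φ.1 v := fun h => huv (φ.2.1 h)
          have := hB (φ.1 u) (φ.1 v) hne
          rw [← this]
          simp only [CD, φ.2.2 u v huv, φ.2.2 v u (Ne.symm huv)]⟩ :
          {ψ : Fin m → Fin n // IsCopy (CD D) G ψ}))
      intro x y hxy
      simp only [Subtype.mk.injEq] at hxy
      exact Subtype.ext (Subtype.mk.inj hxy)
    calc (inducedCopyCount D G' : ℝ) ≤ (copyCount (CD D) G : ℝ) := by exact_mod_cast hle
      _ ≤ δ * (n : ℝ) ^ m := hcount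
end

section
/- If G is a 3-colored complete graph with at least 2 vertices and with no rainbow triangles, then there exist two distinct colors a, b ∈ {1,2,3} and a partition of V(G) into at least two nonempty parts which is (a,b)-monochromatic. -/
/-- `u, v, w` form a rainbow triangle in the 3-colored complete graph `G`: they are
distinct and their three connecting edges receive three distinct colors. -/
def IsRainbow {n : ℕ} (G : Fin n → Fin n → Fin 3) (u v w : Fin n) : Prop :=
  u ≠ v ∧ u ≠ w ∧ v ≠ w ∧ G u v ≠ G u w ∧ G u v ≠ G v w ∧ G u w ≠ G v w

/-- The number of rainbow triangles (as vertex sets) in `G`. -/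
noncomputable def rainbowCount {n : ℕ} (G : Fin n → Fin n → Fin 3) : ℕ :=
  Nat.card {t : Fin n × Fin n × Fin n //
    t.1 < t.2.1 ∧ t.2.1 < t.2.2 ∧ IsRainbow G t.1 t.2.1 t.2.2}

/-- A partition `P` of the vertex set of `G` is `(a,b)`-monochromatic if for any two
distinct parts `X, Y`, all edges between `X` and `Y` have the same color, and this
color is `a` or `b`. -/
def IsMonoPartition {n : ℕ} (G : Fin n → Fin n → Fin 3) (a b : Fin 3)
    (P : Finpartition (Finset.univ : Finset (Fin n))) : Prop :=
  ∀ X ∈ P.parts, ∀ Y ∈ P.parts, X ≠ Y →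
    ∃ c : Fin 3, (c = a ∨ c = b) ∧ ∀ x ∈ X, ∀ y ∈ Y, G x y = c

namespace GallaiAux

variable {N : ℕ}

/-- Edge relation of the color class `c`, restricted to vertices satisfying `P`. -/
def GRel (G : Fin N → Fin N → Fin 3) (P : Fin N → Prop) (c : Fin 3) (x y : Fin N) : Prop :=
  P x ∧ P y ∧ x ≠ y ∧ G x y = c

/-- Reachability in the color class `c` restricted to `P`. -/
def GReach (G : Fin N → Fin N → Fin 3) (P : Fin N → Prop) (c : Fin 3) : Fin N → Fin N → Prop :=
  Relation.ReflTransGen (GRel G P c)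

variable {G : Fin N → Fin N → Fin 3} {P : Fin N → Prop} {c : Fin 3} {x y x' y' : Fin N}

lemma grel_symm (hG : IsColoring G) (h : GRel G P c x y) : GRel G P c y x :=
  ⟨h.2.1, h.1, h.2.2.1.symm, (hG y x).trans h.2.2.2⟩

lemma greach_refl : GReach G P c x x := Relation.ReflTransGen.refl

lemma greach_symm (hG : IsColoring G) (h : GReach G P c x y) : GReach G P c y x := by
  induction h with
  | refl => exact Relation.ReflTransGen.refl
  | tail _ h2 ih => exact Relation.ReflTransGen.head (grel_symm hG h2) ih

lemma greach_trans (h1 : GReach G P c x y) (h2 : GReach G P c y y') : GReach G P c x y' :=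
  Relation.ReflTransGen.trans h1 h2

lemma greach_prop (hx : P x) (h : GReach G P c x y) : P y := by
  rcases Relation.ReflTransGen.cases_tail h with h0 | ⟨u, _, hr⟩
  · rw [← h0] at hx; exact hx
  · exact hr.2.1

lemma greach_ne (h : ¬ GReach G P c x y) (px : P x) (py : P y) (hxy : x ≠ y) : G x y ≠ c :=
  fun hc => h (Relation.ReflTransGen.single ⟨px, py, hxy, hc⟩)

lemma fin3_ne_add_one : ∀ z : Fin 3, z ≠ z + 1 := by decide

/-- Rigidity pivot: moving the first endpoint within its `c`-component does not
change the color of an edge leaving the component. -/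
lemma pivot (hG : IsColoring G) (hrb : ∀ u v w : Fin N, ¬ IsRainbow G u v w)
    (hxx' : GReach G P c x x') (hxy : ¬ GReach G P c x y) (py : P y) :
    G x' y = G x y := by
  induction hxx' with
  | refl => rfl
  | @tail u u' hxu hstep ih =>
    obtain ⟨pu, pu', huu', hc⟩ := hstep
    have hru : ¬ GReach G P c u y := fun h => hxy (hxu.trans h)
    have hru' : ¬ GReach G P c u' y := fun h =>
      hxy ((hxu.tail ⟨pu, pu', huu', hc⟩).trans h)
    have hun : u ≠ y := by rintro rfl; exact hru Relation.ReflTransGen.refl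
    have hu'n : u' ≠ y := by rintro rfl; exact hru' Relation.ReflTransGen.refl
    have h1 : G u y ≠ c := greach_ne hru pu py hun
    have h2 : G u' y ≠ c := greach_ne hru' pu' py hu'n
    have key : G u' y = G u y := by
      by_contra hne
      exact hrb u u' y ⟨huu', hun, hu'n,
        (by rw [hc]; exact fun e => h1 e.symm),
        (by rw [hc]; exact fun e => h2 e.symm),
        fun e => hne e.symm⟩
    exact key.trans ih

/-- Between two different `c`-components, all edges have the same color. -/
lemma mono (hG : IsColoring G) (hrb : ∀ u v w : Fin N, ¬ IsRainbow G u v w)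
    (hxx' : GReach G P c x x') (hyy' : GReach G P c y y')
    (hxy : ¬ GReach G P c x y) (px : P x) (py : P y) : G x' y' = G x y := by
  have px' : P x' := greach_prop px hxx'
  have h1 : G x' y = G x y := pivot hG hrb hxx' hxy py
  have hpy : ¬ GReach G P c y x' := fun h => hxy (hxx'.trans (greach_symm hG h))
  have h2 : G y' x' = G y x' := pivot hG hrb hyy' hpy px'
  calc G x' y' = G y' x' := hG x' y'
    _ = G y x' := h2
    _ = G x' y := hG y x'
    _ = G x y := h1


/-- **Cameron–Edmonds–Lovász**: in a rainbow-triangle-free 3-coloring of a complete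
graph on at least two vertices, some color class is disconnected. -/
lemma cel : ∀ (m : ℕ) (G : Fin (m + 2) → Fin (m + 2) → Fin 3), IsColoring G →
    (∀ u v w, ¬ IsRainbow G u v w) →
    ∃ (c : Fin 3) (x y : Fin (m + 2)), ¬ GReach G (fun _ => True) c x y := by
  intro m
  induction m with
  | zero =>
    intro G hG hrb
    refine ⟨G 0 1 + 1, 0, 1, fun h => ?_⟩
    rcases Relation.ReflTransGen.cases_head h with h0 | ⟨w, ⟨-, -, hne, hc⟩, -⟩
    · exact absurd h0 (by decide)
    · fin_cases w
      · exact hne rfl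
      · exact fin3_ne_add_one (G 0 1) hc
  | succ m IH =>
    intro G hG hrb
    by_contra hcon
    push_neg at hcon
    set v : Fin (m + 3) := Fin.last (m + 2) with hv
    set G' : Fin (m + 2) → Fin (m + 2) → Fin 3 :=
      fun i j => G i.castSucc j.castSucc with hG'def
    have hG'c : IsColoring G' := fun u w => hG _ _
    have hrb' : ∀ u v w, ¬ IsRainbow G' u v w := by
      rintro a b d ⟨h1, h2, h3, h4, h5, h6⟩
      exact hrb _ _ _ ⟨fun e => h1 (Fin.castSucc_injective _ e),
        fun e => h2 (Fin.castSucc_injective _ e),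
        fun e => h3 (Fin.castSucc_injective _ e), h4, h5, h6⟩
    obtain ⟨c, p', q', hpq'⟩ := IH G' hG'c hrb'
    set Pv : Fin (m + 3) → Prop := fun x => x ≠ v with hPv
    set p : Fin (m + 3) := p'.castSucc with hp
    set q : Fin (m + 3) := q'.castSucc with hq
    have hpv : p ≠ v := (Fin.castSucc_lt_last p').ne
    have hqv : q ≠ v := (Fin.castSucc_lt_last q').ne
    -- transfer the IH disconnection to the ambient graph
    have hpq : ¬ GReach G Pv c p q := by
      intro h
      apply hpq'
      have lift := Relation.ReflTransGen.lift
        (fun x : Fin (m + 3) => if hx : x = v then (0 : Fin (m + 2)) else x.castPred hx)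
        (r := GRel G Pv c) (p := GRel G' (fun _ => True) c) ?_ _ _ h
      · simpa only [dif_neg hpv, dif_neg hqv, hp, hq, Fin.castPred_castSucc, Function.onFun, GReach] using lift
      · rintro a b ⟨ha, hb, hab, hcab⟩
        show GRel G' (fun _ => True) c _ _
        refine ⟨trivial, trivial, ?_, ?_⟩
        · intro e
          simp only [dif_neg ha, dif_neg hb] at e
          have e2 := congrArg Fin.castSucc e
          rw [Fin.castSucc_castPred, Fin.castSucc_castPred] at e2
          exact hab e2
        · show G' _ _ = c
          rw [hG'def]
          simp only [dif_neg ha, dif_neg hb, Fin.castSucc_castPred]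
          exact hcab
    -- every vertex other than v reaches a c-neighbor of v within the deleted graph
    have claimS : ∀ y : Fin (m + 3), y ≠ v →
        ∃ s, s ≠ v ∧ G v s = c ∧ GReach G Pv c y s := by
      intro y hy
      have key : ∀ u, GReach G (fun _ => True) c u v →
          u = v ∨ (u ≠ v ∧ ∃ s, s ≠ v ∧ G v s = c ∧ GReach G Pv c u s) := by
        intro u hu
        induction hu using Relation.ReflTransGen.head_induction_on with
        | refl => exact Or.inl rfl
        | @head a w h' _ ih =>
          obtain ⟨-, -, haw, hcaw⟩ := h'
          by_cases hav : a = v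
          · exact Or.inl hav
          · refine Or.inr ⟨hav, ?_⟩
            rcases ih with rfl | ⟨hwv, s, hsv, hvs, hws⟩
            · exact ⟨a, hav, (hG v a).trans hcaw, greach_refl⟩
            · exact ⟨s, hsv, hvs, Relation.ReflTransGen.head ⟨hav, hwv, haw, hcaw⟩ hws⟩
      rcases key y (hcon c y v) with rfl | ⟨-, hs⟩
      · exact absurd rfl hy
      · exact hs
    by_cases hall : ∀ u, u ≠ v → G v u = c
    · -- case (i): all edges at v are colored c, so color c+1 misses v
      rcases Relation.ReflTransGen.cases_head (hcon (c + 1) v p) with heq | ⟨w, ⟨-, -, hvw, hcw⟩, -⟩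
      · exact hpv heq.symm
      · exact fin3_ne_add_one c ((hall w (Ne.symm hvw)).symm.trans hcw)
    · -- case (ii)
      push_neg at hall
      obtain ⟨u₀, hu₀v, hu₀c⟩ := hall
      set γ : Fin 3 := G v u₀ with hγ
      -- a vertex outside the component of u₀
      obtain ⟨y₀, hy₀v, hy₀r⟩ : ∃ y₀, y₀ ≠ v ∧ ¬ GReach G Pv c u₀ y₀ := by
        by_cases h1 : GReach G Pv c u₀ p
        · by_cases h2 : GReach G Pv c u₀ q
          · exact absurd ((greach_symm hG h1).trans h2) hpq
          · exact ⟨q, hqv, h2⟩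
        · exact ⟨p, hpv, h1⟩
      have factA : ∀ u y, GReach G Pv c u₀ u → y ≠ v → ¬ GReach G Pv c u₀ y →
          G u y = γ := by
        intro u y huu hyv hyr
        obtain ⟨s, hsv, hvs, hys⟩ := claimS y hyv
        have hs_r : ¬ GReach G Pv c u₀ s := fun h => hyr (h.trans (greach_symm hG hys))
        have hsu0 : s ≠ u₀ := by rintro rfl; exact hs_r greach_refl
        have hGsu : G s u₀ ≠ c :=
          greach_ne (fun h => hs_r (greach_symm hG h)) hsv hu₀v hsu0
        have hGvsu : G s u₀ = γ := by
          by_contra hne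
          exact hrb v s u₀ ⟨Ne.symm hsv, Ne.symm hu₀v, hsu0,
            fun e => hu₀c (e.symm.trans hvs),
            fun e => hGsu (e.symm.trans hvs),
            fun e => hne e.symm⟩
        have h1 : G y u₀ = G s u₀ :=
          pivot hG hrb (greach_symm hG hys) (fun h => hs_r (greach_symm hG h)) hu₀v
        have h2 : G u y = G u₀ y := pivot hG hrb huu hyr hyv
        rw [h2, hG u₀ y, h1, hGvsu]
      have factB : ∀ u, GReach G Pv c u₀ u → G v u = c ∨ G v u = γ := by
        intro u huu
        by_cases hc1 : G v u = c
        · exact Or.inl hc1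
        right
        obtain ⟨s, hsv, hvs, hys⟩ := claimS y₀ hy₀v
        have hs_r : ¬ GReach G Pv c u₀ s := fun h => hy₀r (h.trans (greach_symm hG hys))
        have huv : u ≠ v := greach_prop (P := Pv) hu₀v huu
        have hus : ¬ GReach G Pv c u s := fun h => hs_r (huu.trans h)
        have hsnu : s ≠ u := fun e => hus (e ▸ greach_refl)
        have hGus : G u s = γ := factA u s huu hsv hs_r
        have hγsu : G s u = γ := (hG s u).trans hGus
        by_contra hne
        exact hrb v s u ⟨Ne.symm hsv, Ne.symm huv, hsnu,
          fun e => hc1 (e.symm.trans hvs),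
          fun e => hu₀c ((hvs.symm.trans (e.trans hγsu)).symm),
          fun e => hne (e.trans hγsu)⟩
      -- the third color b cannot leave the component of u₀, contradiction
      obtain ⟨b, hbc, hbγ⟩ : ∃ b : Fin 3, b ≠ c ∧ b ≠ γ := by
        have : ∀ c γ : Fin 3, γ ≠ c → ∃ b : Fin 3, b ≠ c ∧ b ≠ γ := by decide
        exact this c γ hu₀c
      have inv : ∀ w, GReach G (fun _ => True) b u₀ w → GReach G Pv c u₀ w := by
        intro w h
        induction h with
        | refl => exact greach_refl
        | @tail u w _ hstep ih =>
          obtain ⟨-, -, huw, hbw⟩ := hstep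
          by_cases hwv : w = v
          · subst hwv
            rcases factB u ih with h1 | h1
            · exact absurd (((hG u v).trans h1).symm.trans hbw).symm hbc
            · exact absurd (((hG u v).trans h1).symm.trans hbw).symm hbγ
          · by_contra hnr
            exact hbγ (hbw.symm.trans (factA u w ih hwv hnr))
      exact (greach_prop (P := Pv) hu₀v (inv v (hcon b u₀ v))) rfl

end GallaiAux

/-- **Gallai.** A 3-colored complete graph on at least 2 vertices with no
rainbow triangles admits an `(a,b)`-monochromatic partition with at least two parts,
for some two distinct colors `a, b`. -/
theorem gallai_partition {n : ℕ} (hn : 2 ≤ n) (G : Fin n → Fin n → Fin 3)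
    (hG : IsColoring G) (hrb : ∀ u v w : Fin n, ¬ IsRainbow G u v w) :
    ∃ a b : Fin 3, a ≠ b ∧ ∃ P : Finpartition (Finset.univ : Finset (Fin n)),
      2 ≤ P.parts.card ∧ IsMonoPartition G a b P := by
  obtain ⟨m, rfl⟩ : ∃ m, n = m + 2 := ⟨n - 2, by omega⟩
  obtain ⟨c, x0, y0, hnr⟩ := GallaiAux.cel m G hG hrb
  classical
  let s : Setoid (Fin (m + 2)) :=
    ⟨GallaiAux.GReach G (fun _ => True) c,
     fun _ => Relation.ReflTransGen.refl,
     fun h => GallaiAux.greach_symm hG h,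
     fun h1 h2 => h1.trans h2⟩
  letI : DecidableRel s.r := fun _ _ => Classical.dec _
  refine ⟨c + 1, c + 2, by
    have : ∀ c : Fin 3, c + 1 ≠ c + 2 := by decide
    exact this c, ?_⟩
  set P := Finpartition.ofSetoid s with hP
  have hXmem := P.part_mem.mpr (Finset.mem_univ x0)
  have hYmem := P.part_mem.mpr (Finset.mem_univ y0)
  have hXY : P.part x0 ≠ P.part y0 := by
    intro e
    have hy : y0 ∈ P.part x0 := e ▸ P.mem_part (Finset.mem_univ y0)
    exact hnr (Finpartition.mem_part_ofSetoid_iff_rel.mp hy)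
  refine ⟨P, Finset.one_lt_card.mpr ⟨_, hXmem, _, hYmem, hXY⟩, ?_⟩
  intro X hX Y hY hXYne
  obtain ⟨x, hx⟩ := P.nonempty_of_mem_parts hX
  obtain ⟨y, hy⟩ := P.nonempty_of_mem_parts hY
  have hXp : X = P.part x := (P.part_eq_of_mem hX hx).symm
  have hYp : Y = P.part y := (P.part_eq_of_mem hY hy).symm
  have hnxy : ¬ GallaiAux.GReach G (fun _ => True) c x y := by
    intro h
    apply hXYne
    have hmem : y ∈ P.part x := Finpartition.mem_part_ofSetoid_iff_rel.mpr h
    rw [hXp, hYp, P.part_eq_of_mem (P.part_mem.mpr (Finset.mem_univ x)) hmem]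
  refine ⟨G x y, ?_, ?_⟩
  · have hne : G x y ≠ c := GallaiAux.greach_ne hnxy trivial trivial
      (fun e => hnxy (e ▸ Relation.ReflTransGen.refl))
    have : ∀ c e : Fin 3, e ≠ c → e = c + 1 ∨ e = c + 2 := by decide
    exact this c _ hne
  · intro x' hx' y' hy'
    have hxx' : GallaiAux.GReach G (fun _ => True) c x x' :=
      Finpartition.mem_part_ofSetoid_iff_rel.mp (hXp ▸ hx')
    have hyy' : GallaiAux.GReach G (fun _ => True) c y y' :=
      Finpartition.mem_part_ofSetoid_iff_rel.mp (hYp ▸ hy')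
    exact GallaiAux.mono hG hrb hxx' hyy' hnxy trivial trivial
end

section
/- Let G be a 3-colored complete graph, let a, b ∈ {1,2,3} be colors, and let P be an (a,b)-monochromatic partition of V(G). If for every part X of P the restriction of G to X contains no rainbow triangle, then G contains no rainbow triangle. -/
/-- If `P` is an `(a,b)`-monochromatic partition of a 3-colored
complete graph `G`, and the restriction of `G` to each part of `P` has no rainbow
triangle, then `G` has no rainbow triangle. -/
theorem gallai_partition_converse {n : ℕ} (G : Fin n → Fin n → Fin 3)
    (hG : IsColoring G) (a b : Fin 3)
    (P : Finpartition (Finset.univ : Finset (Fin n)))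
    (hP : IsMonoPartition G a b P)
    (hparts : ∀ X ∈ P.parts, ∀ u ∈ X, ∀ v ∈ X, ∀ w ∈ X, ¬ IsRainbow G u v w) :
    ∀ u v w : Fin n, ¬ IsRainbow G u v w := by
  intro u v w h
  obtain ⟨X, hX, hu⟩ := P.exists_mem (Finset.mem_univ u)
  obtain ⟨Y, hY, hv⟩ := P.exists_mem (Finset.mem_univ v)
  obtain ⟨Z, hZ, hw⟩ := P.exists_mem (Finset.mem_univ w)
  obtain ⟨huv, huw, hvw, c1, c2, c3⟩ := h
  by_cases hXY : X = Y
  · by_cases hXZ : X = Z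
    · exact hparts X hX u hu v (hXY ▸ hv) w (hXZ ▸ hw) ⟨huv, huw, hvw, c1, c2, c3⟩
    · obtain ⟨c, _, hc⟩ := hP X hX Z hZ hXZ
      exact c3 ((hc u hu w hw).trans (hc v (hXY ▸ hv) w hw).symm)
  · by_cases hXZ : X = Z
    · obtain ⟨c, _, hc⟩ := hP X hX Y hY hXY
      exact c2 ((hc u hu v hv).trans ((hG v w).trans (hc w (hXZ ▸ hw) v hv)).symm)
    · by_cases hYZ : Y = Z
      · obtain ⟨c, _, hc⟩ := hP X hX Y hY hXY
        exact c1 ((hc u hu v hv).trans (hc u hu w (hYZ ▸ hw)).symm)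
      · obtain ⟨c₁, hab₁, hc₁⟩ := hP X hX Y hY hXY
        obtain ⟨c₂, hab₂, hc₂⟩ := hP X hX Z hZ hXZ
        obtain ⟨c₃, hab₃, hc₃⟩ := hP Y hY Z hZ hYZ
        have e1 := hc₁ u hu v hv
        have e2 := hc₂ u hu w hw
        have e3 := hc₃ v hv w hw
        rcases hab₁ with h1 | h1 <;> rcases hab₂ with h2 | h2 <;>
          rcases hab₃ with h3 | h3 <;> subst h1 <;> subst h2 <;> subst h3 <;>
          simp_all
end

section
/- For all integers d ≥ 2 and r ≥ 2d, there exists a collection R of d-tuples with entries in {1,…,r} such that |R| ≥ (r/2)² and any two distinct d-tuples in R agree in at most one coordinate. -/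
/-- For `d ≥ 2` and `r ≥ 2d` there is a family `R` of `d`-tuples with
entries in a set of `r` elements such that `|R| ≥ (r/2)²` and any two distinct tuples
in `R` agree in at most one coordinate. -/
theorem design_exists (d r : ℕ) (hd : 2 ≤ d) (hr : 2 * d ≤ r) :
    ∃ R : Finset (Fin d → Fin r), ((r : ℝ) / 2) ^ 2 ≤ (R.card : ℝ) ∧
      ∀ x ∈ R, ∀ y ∈ R, x ≠ y →
        (Finset.univ.filter (fun i : Fin d => x i = y i)).card ≤ 1 := by
  obtain ⟨p, pp, hp1, hp2⟩ := Nat.exists_prime_lt_and_le_two_mul (r / 2) (by omega)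
  have hpr : p ≤ r := le_trans hp2 (by omega)
  have hdp : d ≤ p := by omega
  haveI : Fact p.Prime := ⟨pp⟩
  set f : ZMod p × ZMod p → (Fin d → Fin r) := fun ab i =>
    ⟨(ab.1 + ab.2 * ((i : ℕ) : ZMod p)).val, lt_of_lt_of_le (ZMod.val_lt _) hpr⟩ with hf
  -- coords are cast injectively into ZMod p
  have hcast : ∀ i j : Fin d, ((i : ℕ) : ZMod p) = ((j : ℕ) : ZMod p) → i = j := by
    intro i j h
    have : ((i : ℕ) : ZMod p).val = ((j : ℕ) : ZMod p).val := by rw [h]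
    rw [ZMod.val_cast_of_lt (by omega), ZMod.val_cast_of_lt (by omega)] at this
    exact Fin.ext this
  have key : ∀ a b a' b' : ZMod p, ∀ i : Fin d,
      f (a, b) i = f (a', b') i → a + b * ((i : ℕ) : ZMod p) = a' + b' * ((i : ℕ) : ZMod p) := by
    intro a b a' b' i h
    have := congrArg Fin.val h
    simpa [hf] using ZMod.val_injective p this
  have hinj : Function.Injective f := by
    rintro ⟨a, b⟩ ⟨a', b'⟩ h
    have h0 := key a b a' b' ⟨0, by omega⟩ (by rw [h])
    have h1 := key a b a' b' ⟨1, by omega⟩ (by rw [h])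
    simp only [Fin.val_mk, Nat.cast_zero, Nat.cast_one, mul_zero, mul_one, add_zero] at h0 h1
    have hb : b = b' := by
      have := h1
      rw [h0] at this
      exact add_left_cancel this
    simp [h0, hb]
  refine ⟨Finset.image f Finset.univ, ?_, ?_⟩
  · rw [Finset.card_image_of_injective _ hinj, Finset.card_univ]
    have hcard : Fintype.card (ZMod p × ZMod p) = p * p := by
      simp [ZMod.card]
    rw [hcard]
    have h2p : r ≤ 2 * p := by omega
    have : (r : ℝ) / 2 ≤ (p : ℝ) := by
      rw [div_le_iff₀ (by norm_num)]
      have := (Nat.cast_le (α := ℝ)).2 h2p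
      push_cast at this ⊢
      linarith
    have h0 : (0 : ℝ) ≤ (r : ℝ) / 2 := by positivity
    push_cast
    nlinarith
  · intro x hx y hy hxy
    rw [Finset.card_le_one]
    intro i hi j hj
    by_contra hij
    obtain ⟨ab, -, rfl⟩ := Finset.mem_image.1 hx
    obtain ⟨ab', -, rfl⟩ := Finset.mem_image.1 hy
    obtain ⟨a, b⟩ := ab
    obtain ⟨a', b'⟩ := ab'
    have ei := key a b a' b' i (Finset.mem_filter.1 hi).2
    have ej := key a b a' b' j (Finset.mem_filter.1 hj).2
    have hbb : b = b' := by
      have hij' : ((i : ℕ) : ZMod p) - ((j : ℕ) : ZMod p) ≠ 0 := by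
        intro h
        exact hij (hcast i j (by linear_combination h))
      have : (b - b') * (((i : ℕ) : ZMod p) - ((j : ℕ) : ZMod p)) = 0 := by
        ring_nf
        ring_nf at ei ej
        linear_combination ei - ej
      rcases mul_eq_zero.1 this with h | h
      · exact sub_eq_zero.1 h
      · exact absurd h hij'
    have haa : a = a' := by
      rw [hbb] at ei
      exact add_right_cancel ei
    exact hxy (by rw [haa, hbb])
end
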